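/- Let G be a countable discrete abelian group with compact dual group Ĝ, and let A = [a_{m,n}] be an M×N matrix with entries a_{m,n} ∈ ℓ²(G). Then the operator 𝒜 : x ↦ A ∗ x is a well-defined bounded operator from ℓ²_N(G) into ℓ²_M(G) if and only if every entry of the transfer matrix Â(ξ) = [â_{m,n}(ξ)] belongs to L^∞(Ĝ). -/

import Mathlib

open scoped ComplexConjugate ENNReal Matrix
open MeasureTheory

noncomputable section

namespace GroupSampling

/-- `ℓ²(G)` with values in `ℂ`. -/
abbrev ell2 (G : Type*) := lp (fun _ : G => ℂ) 2

/-- the product Hilbert space `ℓ²_N(G) = ℓ²(G) × ⋯ × ℓ²(G)` (`N` times). -/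
abbrev ell2N (G : Type*) (N : ℕ) := PiLp 2 (fun _ : Fin N => ell2 G)

/-- `ℓ²_N(G)` is complete (its uniformity is definitionally the product uniformity). -/
instance ell2N.completeSpace {G : Type*} {N : ℕ} : CompleteSpace (ell2N G N) :=
  (inferInstance : CompleteSpace (PiLp 2 (fun _ : Fin N => ell2 G)))

/-- the dual group `Ĝ` of the (countable discrete abelian) group `G`. -/
abbrev GDual (G : Type*) [AddCommGroup G] [TopologicalSpace G] : Type _ :=
  PontryaginDual (Multiplicative G)

variable {G : Type*} [AddCommGroup G] [Countable G] [TopologicalSpace G] [DiscreteTopology G]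

/-- the pairing `⟨g, ξ⟩ ∈ 𝕋 ⊆ ℂ` between a group element and a character. -/
def pairing (g : G) (ξ : GDual G) : ℂ := (ξ (Multiplicative.ofAdd g) : ℂ)

/-- translation `(T_g x)(h) = x(h - g)` on `ℓ²(G)`. -/
def shift (g : G) (x : ell2 G) : ell2 G :=
  ⟨fun h => x (h - g), by
    have hx : Summable fun h => ‖(x : ∀ _ : G, ℂ) h‖ ^ (2 : ℝ≥0∞).toReal :=
      (memℓp_gen_iff (by norm_num)).mp (lp.memℓp x)
    exact memℓp_gen (((Equiv.subRight g).summable_iff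
      (f := fun h => ‖(x : ∀ _ : G, ℂ) h‖ ^ (2 : ℝ≥0∞).toReal)).mpr hx)⟩

/-- componentwise translation on `ℓ²_N(G)`. -/
def shiftN {N : ℕ} (g : G) (x : ell2N G N) : ell2N G N := WithLp.toLp 2 (fun n => shift g (x n))

/-- the involution `x*(g) = conj (x(-g))` on `ℓ²(G)`. -/
def invol (x : ell2 G) : ell2 G :=
  ⟨fun g => conj ((x : ∀ _ : G, ℂ) (-g)), by
    have hx : Summable fun h => ‖(x : ∀ _ : G, ℂ) h‖ ^ (2 : ℝ≥0∞).toReal :=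
      (memℓp_gen_iff (by norm_num)).mp (lp.memℓp x)
    refine memℓp_gen ?_
    have := ((Equiv.neg G).summable_iff
      (f := fun h => ‖(x : ∀ _ : G, ℂ) h‖ ^ (2 : ℝ≥0∞).toReal)).mpr hx
    simpa [Function.comp_def] using this⟩

/-- entry `m` of the matrix convolution `A ∗ x` of `A ∈ M_{M×N}(ℓ²(G))` with `x ∈ ℓ²_N(G)`:
`(A ∗ x)_m(g) = Σ_{n=1}^N Σ_{g' ∈ G} a_{m,n}(g - g')·x_n(g')`. -/
def convEntry {N M : ℕ} (A : Fin M → Fin N → ell2 G) (x : ell2N G N) (m : Fin M) (g : G) : ℂ :=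
  ∑ n, ∑' g' : G, (A m n : ∀ _ : G, ℂ) (g - g') * (x n : ∀ _ : G, ℂ) g'

/-- spectral norm (largest singular value, i.e. Euclidean operator norm) of a complex matrix. -/
def specNorm {M N : ℕ} (B : Matrix (Fin M) (Fin N) ℂ) : ℝ :=
  ‖LinearMap.toContinuousLinearMap (Matrix.toEuclideanLin B)‖

/-- smallest eigenvalue `λ_min` of the positive semidefinite hermitian matrix `Bᴴ * B`. -/
def lamMin {M N : ℕ} (B : Matrix (Fin M) (Fin N) ℂ) : ℝ :=
  ⨅ i, (Matrix.isHermitian_conjTranspose_mul_self B).eigenvalues i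

/-- largest eigenvalue `λ_max` of the positive semidefinite hermitian matrix `Bᴴ * B`. -/
def lamMax {M N : ℕ} (B : Matrix (Fin M) (Fin N) ℂ) : ℝ :=
  ⨆ i, (Matrix.isHermitian_conjTranspose_mul_self B).eigenvalues i

/-- `v` is a Bessel sequence in `ℓ²_N(G)` with Bessel bound `β`. -/
def IsBesselFamily {N : ℕ} {ι : Type*} (v : ι → ell2N G N) (β : ℝ) : Prop :=
  ∀ f : ell2N G N,
    Summable (fun i => ‖(inner ℂ f (v i) : ℂ)‖ ^ 2) ∧
    ∑' i, ‖(inner ℂ f (v i) : ℂ)‖ ^ 2 ≤ β * ‖f‖ ^ 2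

/-- `v` is a frame for `ℓ²_N(G)` with frame bounds `α`, `β`. -/
def IsFrameFamily {N : ℕ} {ι : Type*} (v : ι → ell2N G N) (α β : ℝ) : Prop :=
  ∀ f : ell2N G N,
    Summable (fun i => ‖(inner ℂ f (v i) : ℂ)‖ ^ 2) ∧
    α * ‖f‖ ^ 2 ≤ ∑' i, ‖(inner ℂ f (v i) : ℂ)‖ ^ 2 ∧
    ∑' i, ‖(inner ℂ f (v i) : ℂ)‖ ^ 2 ≤ β * ‖f‖ ^ 2

variable [MeasurableSpace (GDual G)] [BorelSpace (GDual G)] [CompactSpace (GDual G)]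

/-- `F` is the Plancherel (Fourier) unitary isomorphism `ℓ²(G) ≃ L²(Ĝ)`: a linear isometric
bijection which on `ℓ¹ ∩ ℓ²` is given by the character sum `x̂(ξ) = Σ_{g∈G} x(g)·⟨-g,ξ⟩`. -/
def IsFourier (μ : Measure (GDual G)) (F : ell2 G ≃ₗᵢ[ℂ] Lp ℂ 2 μ) : Prop :=
  ∀ x : ell2 G, (Summable fun g => ‖(x : ∀ _ : G, ℂ) g‖) →
    (F x : GDual G → ℂ) =ᵐ[μ] fun ξ => ∑' g : G, (x : ∀ _ : G, ℂ) g * pairing (-g) ξ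


/-! ### Auxiliary material for the proof of `statement0` -/

section AuxStatement0

set_option linter.unusedSectionVars false
set_option maxHeartbeats 1000000
set_option synthInstance.maxHeartbeats 200000

variable [DecidableEq G]

lemma aux_hpq2 : 1/(2:ℝ≥0∞) = 1/∞ + 1/2 := by simp

lemma aux_hpq1 : 1/(1:ℝ≥0∞) = 1/2 + 1/2 := by
  rw [ENNReal.div_add_div_same, one_add_one_eq_two,
    ENNReal.div_self two_ne_zero ENNReal.ofNat_ne_top, one_div, inv_one]

/-! #### Basic `ℓ²(G)` lemmas -/

lemma ell2_ext {x y : ell2 G} (h : ∀ g, (x : ∀ _ : G, ℂ) g = (y : ∀ _ : G, ℂ) g) : x = y :=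
  lp.ext (funext h)

lemma single_apply_self' (g : G) (c : ℂ) :
    ((lp.single 2 g c : ell2 G) : ∀ _ : G, ℂ) g = c :=
  lp.single_apply_self (E := fun _ : G => ℂ) 2 g c

lemma single_apply_ne' (g : G) (c : ℂ) {h : G} (hh : h ≠ g) :
    ((lp.single 2 g c : ell2 G) : ∀ _ : G, ℂ) h = 0 :=
  lp.single_apply_ne (E := fun _ : G => ℂ) 2 g c hh

lemma shift_apply (g : G) (x : ell2 G) (h : G) :
    (shift g x : ∀ _ : G, ℂ) h = (x : ∀ _ : G, ℂ) (h - g) := rfl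

lemma shift_add (g : G) (x y : ell2 G) : shift g (x + y) = shift g x + shift g y :=
  ell2_ext fun h => by simp [shift_apply, lp.coeFn_add]

lemma shift_smul (g : G) (c : ℂ) (x : ell2 G) : shift g (c • x) = c • shift g x :=
  ell2_ext fun h => by simp [shift_apply, lp.coeFn_smul]

lemma norm_shift (g : G) (x : ell2 G) : ‖shift g x‖ = ‖x‖ := by
  have h2 : (0 : ℝ) < (2 : ℝ≥0∞).toReal := by norm_num
  rw [lp.norm_eq_tsum_rpow h2, lp.norm_eq_tsum_rpow h2]
  congr 1
  simpa [shift_apply] using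
    (Equiv.subRight g).tsum_eq (fun h => ‖(x : ∀ _ : G, ℂ) h‖ ^ (2 : ℝ≥0∞).toReal)

def shiftCLM (g : G) : ell2 G →L[ℂ] ell2 G :=
  LinearMap.mkContinuous
    { toFun := shift g
      map_add' := shift_add g
      map_smul' := shift_smul g } 1
    (fun x => by simp [norm_shift])

@[simp] lemma shiftCLM_apply (g : G) (x : ell2 G) : shiftCLM g x = shift g x := rfl

lemma shift_single (g g' : G) (c : ℂ) :
    shift g (lp.single 2 g' c) = lp.single 2 (g' + g) c := by
  refine ell2_ext fun h => ?_
  rw [shift_apply]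
  by_cases hh : h = g' + g
  · subst hh
    rw [add_sub_cancel_right, single_apply_self', single_apply_self']
  · rw [single_apply_ne' g' c (fun hc => hh (eq_add_of_sub_eq hc)),
      single_apply_ne' (g' + g) c hh]

def evalCLM (g : G) : ell2 G →L[ℂ] ℂ :=
  LinearMap.mkContinuous
    { toFun := fun y => (y : ∀ _ : G, ℂ) g
      map_add' := fun x y => by simp [lp.coeFn_add]
      map_smul' := fun c x => by simp [lp.coeFn_smul] }
    1 (fun y => by
      show ‖(y : ∀ _ : G, ℂ) g‖ ≤ 1 * ‖y‖
      simpa using lp.norm_apply_le_norm (by norm_num : (2:ℝ≥0∞) ≠ 0) y g)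

@[simp] lemma evalCLM_apply (g : G) (y : ell2 G) : evalCLM g y = (y : ∀ _ : G, ℂ) g := rfl

def convKer (a : ell2 G) (g : G) : ell2 G :=
  ⟨fun g' => conj ((a : ∀ _ : G, ℂ) (g - g')), by
    have hx : Summable fun h => ‖(a : ∀ _ : G, ℂ) h‖ ^ (2 : ℝ≥0∞).toReal :=
      (memℓp_gen_iff (by norm_num)).mp (lp.memℓp a)
    refine memℓp_gen ?_
    have := ((Equiv.subLeft g).summable_iff
      (f := fun h => ‖(a : ∀ _ : G, ℂ) h‖ ^ (2 : ℝ≥0∞).toReal)).mpr hx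
    simpa [Function.comp_def] using this⟩

lemma convKer_apply (a : ell2 G) (g g' : G) :
    (convKer a g : ∀ _ : G, ℂ) g' = conj ((a : ∀ _ : G, ℂ) (g - g')) := rfl

lemma convFunc_apply (a : ell2 G) (g : G) (y : ell2 G) :
    (innerSL ℂ (convKer a g)) y
      = ∑' g', (a : ∀ _ : G, ℂ) (g - g') * (y : ∀ _ : G, ℂ) g' := by
  rw [innerSL_apply_apply, lp.inner_eq_tsum]
  congr 1
  funext g'
  simp [RCLike.inner_apply, convKer_apply, mul_comm]

lemma dense_span_single :
    Dense (↑(Submodule.span ℂ (Set.range fun g : G => (lp.single 2 g (1 : ℂ) : ell2 G)))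
      : Set (ell2 G)) := by
  classical
  rw [Submodule.dense_iff_topologicalClosure_eq_top, Submodule.topologicalClosure_eq_top_iff,
    Submodule.eq_bot_iff]
  intro y hy
  refine ell2_ext fun g => ?_
  have := (Submodule.mem_orthogonal _ y).mp hy (lp.single 2 g 1)
    (Submodule.subset_span ⟨g, rfl⟩)
  simpa [lp.inner_single_left, RCLike.inner_apply] using this

/-! #### The pairing as a bounded function -/

lemma pairing_continuous (g : G) : Continuous (pairing g) := by
  have h1 : Continuous fun ξ : ContinuousMonoidHom (Multiplicative G) Circle =>
      ξ (Multiplicative.ofAdd g) := continuous_eval_const _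
  exact continuous_induced_dom.comp h1

@[simp] lemma norm_pairing (g : G) (ξ : GDual G) : ‖pairing g ξ‖ = 1 := by
  simp [pairing, Circle.norm_coe]

lemma pairing_add (g g' : G) (ξ : GDual G) :
    pairing (g + g') ξ = pairing g ξ * pairing g' ξ := by
  simp [pairing, ofAdd_add, map_mul]

lemma memLp_pairing (μ : Measure (GDual G)) (g : G) : MemLp (pairing g) ∞ μ :=
  memLp_top_of_bound (pairing_continuous g).aestronglyMeasurable 1
    (Filter.Eventually.of_forall fun ξ => le_of_eq (norm_pairing g ξ))

/-! #### Multiplication operators between `Lp` spaces -/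

lemma aux_holder {p q r : ℝ≥0∞} (hpqr : 1/p = 1/q + 1/r) : ENNReal.HolderTriple q r p :=
  ⟨by simpa [one_div] using hpqr.symm⟩

def mulCLM (μ : Measure (GDual G)) {p q r : ℝ≥0∞} [Fact (1 ≤ p)] [Fact (1 ≤ r)]
    {w : GDual G → ℂ} (hw : MemLp w q μ) (hpqr : 1/p = 1/q + 1/r) :
    Lp ℂ r μ →L[ℂ] Lp ℂ p μ :=
  LinearMap.mkContinuous
    { toFun := fun f => MemLp.toLp (w • ⇑f) ((Lp.memLp f).smul hw (hpqr := aux_holder hpqr))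
      map_add' := fun f f' => by
        apply Lp.ext
        filter_upwards [MemLp.coeFn_toLp ((Lp.memLp (f + f')).smul hw (hpqr := aux_holder hpqr)),
          MemLp.coeFn_toLp ((Lp.memLp f).smul hw (hpqr := aux_holder hpqr)),
          MemLp.coeFn_toLp ((Lp.memLp f').smul hw (hpqr := aux_holder hpqr)),
          Lp.coeFn_add f f',
          Lp.coeFn_add (MemLp.toLp (w • ⇑f) ((Lp.memLp f).smul hw (hpqr := aux_holder hpqr)))
            (MemLp.toLp (w • ⇑f') ((Lp.memLp f').smul hw (hpqr := aux_holder hpqr)))] with ξ h1 h2 h3 h4 h5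
        rw [h1, h5, Pi.add_apply, h2, h3, Pi.smul_apply', Pi.smul_apply', Pi.smul_apply',
          h4, Pi.add_apply, smul_add]
      map_smul' := fun c f => by
        simp only [RingHom.id_apply]
        apply Lp.ext
        filter_upwards [MemLp.coeFn_toLp ((Lp.memLp (c • f)).smul hw (hpqr := aux_holder hpqr)),
          MemLp.coeFn_toLp ((Lp.memLp f).smul hw (hpqr := aux_holder hpqr)),
          Lp.coeFn_smul c f,
          Lp.coeFn_smul c (MemLp.toLp (w • ⇑f) ((Lp.memLp f).smul hw (hpqr := aux_holder hpqr)))] with ξ h1 h2 h3 h4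
        rw [h1, h4, Pi.smul_apply, h2, Pi.smul_apply', Pi.smul_apply', h3, Pi.smul_apply]
        exact smul_comm _ _ _ }
    (eLpNorm w q μ).toReal
    (fun f => by
      show ‖MemLp.toLp (w • ⇑f) ((Lp.memLp f).smul hw (hpqr := aux_holder hpqr))‖ ≤ _
      refine le_trans (le_of_eq (Lp.norm_toLp _ _)) ?_
      refine le_trans (ENNReal.toReal_mono
        (ENNReal.mul_ne_top hw.eLpNorm_ne_top (Lp.eLpNorm_ne_top f))
        (eLpNorm_smul_le_mul_eLpNorm (Lp.aestronglyMeasurable f) hw.1 (hpqr := aux_holder hpqr))) ?_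
      rw [ENNReal.toReal_mul, Lp.norm_def])

lemma mulCLM_coeFn (μ : Measure (GDual G)) {p q r : ℝ≥0∞} [Fact (1 ≤ p)] [Fact (1 ≤ r)]
    {w : GDual G → ℂ} (hw : MemLp w q μ) (hpqr : 1/p = 1/q + 1/r) (f : Lp ℂ r μ) :
    ⇑(mulCLM μ hw hpqr f) =ᵐ[μ] fun ξ => w ξ * (f : GDual G → ℂ) ξ := by
  filter_upwards [MemLp.coeFn_toLp ((Lp.memLp f).smul hw (hpqr := aux_holder hpqr))] with ξ h
  exact h.trans (by simp [Pi.smul_apply, smul_eq_mul])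

def charCLM (μ : Measure (GDual G)) (g : G) : Lp ℂ 2 μ →L[ℂ] Lp ℂ 2 μ :=
  mulCLM μ (memLp_pairing μ g) aux_hpq2

lemma charCLM_coeFn (μ : Measure (GDual G)) (g : G) (f : Lp ℂ 2 μ) :
    ⇑(charCLM μ g f) =ᵐ[μ] fun ξ => pairing g ξ * (f : GDual G → ℂ) ξ :=
  mulCLM_coeFn μ (memLp_pairing μ g) aux_hpq2 f

/-! #### Fourier lemmas -/

section Fourier

variable {μ : Measure (GDual G)} [IsProbabilityMeasure μ]
variable {F : ell2 G ≃ₗᵢ[ℂ] Lp ℂ 2 μ}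

def FL (F : ell2 G ≃ₗᵢ[ℂ] Lp ℂ 2 μ) : ell2 G →L[ℂ] Lp ℂ 2 μ :=
  F.toLinearIsometry.toContinuousLinearMap

def FLsymm (F : ell2 G ≃ₗᵢ[ℂ] Lp ℂ 2 μ) : Lp ℂ 2 μ →L[ℂ] ell2 G :=
  F.symm.toLinearIsometry.toContinuousLinearMap

@[simp] lemma FL_apply (x : ell2 G) : FL F x = F x := rfl

@[simp] lemma FLsymm_apply (f : Lp ℂ 2 μ) : FLsymm F f = F.symm f := rfl

lemma hF_single (hF : IsFourier μ F) (g : G) (c : ℂ) :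
    (F (lp.single 2 g c) : GDual G → ℂ) =ᵐ[μ] fun ξ => c * pairing (-g) ξ := by
  have hs : Summable fun h => ‖(lp.single 2 g c : ∀ _ : G, ℂ) h‖ := by
    apply summable_of_ne_finset_zero (s := {g})
    intro h hh
    rw [single_apply_ne' g c (by simpa using hh), norm_zero]
  filter_upwards [hF _ hs] with ξ hξ
  rw [hξ, tsum_eq_single g]
  · rw [single_apply_self']
  · intro h hh
    rw [single_apply_ne' g c hh, zero_mul]

lemma fourier_shift (hF : IsFourier μ F) (g : G) (y : ell2 G) :
    F (shift g y) = charCLM μ (-g) (F y) := by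
  have h : (FL F) ∘L shiftCLM g = (charCLM μ (-g)) ∘L FL F := by
    apply ContinuousLinearMap.ext_on (dense_span_single (G := G))
    rintro _ ⟨g', rfl⟩
    simp only [ContinuousLinearMap.comp_apply, shiftCLM_apply, FL_apply]
    rw [shift_single]
    apply Lp.ext
    filter_upwards [hF_single hF (g' + g) (1 : ℂ),
      charCLM_coeFn μ (-g) (F (lp.single 2 g' 1)), hF_single hF g' (1 : ℂ)] with ξ h1 h2 h3
    rw [h1, h2, h3, one_mul, one_mul, neg_add, pairing_add, mul_comm]
  have := DFunLike.congr_fun h y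
  simpa using this

lemma mul_fourier_single (hF : IsFourier μ F) (a : ell2 G)
    (hw : MemLp (⇑(F a)) ∞ μ) (g' : G) :
    mulCLM μ hw aux_hpq2 (F (lp.single 2 g' 1)) = F (shift g' a) := by
  rw [fourier_shift hF g' a]
  apply Lp.ext
  filter_upwards [mulCLM_coeFn μ hw aux_hpq2 (F (lp.single 2 g' 1)),
    hF_single hF g' (1 : ℂ), charCLM_coeFn μ (-g') (F a)] with ξ h1 h2 h3
  rw [h1, h2, h3, one_mul, mul_comm]

lemma conv_spec (hF : IsFourier μ F) (a : ell2 G) (hw : MemLp (⇑(F a)) ∞ μ)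
    (y : ell2 G) (g : G) :
    ((F.symm (mulCLM μ hw aux_hpq2 (F y)) : ∀ _ : G, ℂ) g)
      = ∑' g', (a : ∀ _ : G, ℂ) (g - g') * (y : ∀ _ : G, ℂ) g' := by
  have h : (evalCLM g) ∘L (FLsymm F ∘L (mulCLM μ hw aux_hpq2 ∘L FL F))
      = innerSL ℂ (convKer a g) := by
    apply ContinuousLinearMap.ext_on (dense_span_single (G := G))
    rintro _ ⟨g', rfl⟩
    simp only [ContinuousLinearMap.comp_apply, FL_apply, FLsymm_apply, evalCLM_apply]
    rw [mul_fourier_single hF a hw g', LinearIsometryEquiv.symm_apply_apply, convFunc_apply,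
      tsum_eq_single g']
    · rw [single_apply_self', mul_one, shift_apply]
    · intro b hb
      rw [single_apply_ne' g' 1 hb, mul_zero]
  have h2 := DFunLike.congr_fun h y
  simp only [ContinuousLinearMap.comp_apply, FL_apply, FLsymm_apply, evalCLM_apply] at h2
  exact h2.trans (convFunc_apply a g y)

lemma dense_span_fourier_single :
    Dense (↑(Submodule.span ℂ (Set.range fun g : G => F (lp.single 2 g (1 : ℂ))))
      : Set (Lp ℂ 2 μ)) := by
  have hd := dense_span_single (G := G)
  intro f
  obtain ⟨y, rfl⟩ : ∃ y, F y = f := ⟨F.symm f, F.apply_symm_apply f⟩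
  have hsub : ⇑F '' ↑(Submodule.span ℂ (Set.range fun g : G => (lp.single 2 g (1:ℂ) : ell2 G)))
      ⊆ ↑(Submodule.span ℂ (Set.range fun g : G => F (lp.single 2 g (1:ℂ)))) := by
    rintro _ ⟨z, hz, rfl⟩
    induction hz using Submodule.span_induction with
    | mem u hu =>
      obtain ⟨g, rfl⟩ := hu
      exact Submodule.subset_span ⟨g, rfl⟩
    | zero => simpa using (Submodule.span ℂ
        (Set.range fun g : G => F (lp.single 2 g (1:ℂ)))).zero_mem
    | add u v hu hv hFu hFv => simpa [map_add] using (Submodule.span ℂ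
        (Set.range fun g : G => F (lp.single 2 g (1:ℂ)))).add_mem hFu hFv
    | smul c u hu hFu => simpa [_root_.map_smul] using (Submodule.span ℂ
        (Set.range fun g : G => F (lp.single 2 g (1:ℂ)))).smul_mem c hFu
  have h2 : F y ∈ closure (⇑F.toHomeomorph ''
      ↑(Submodule.span ℂ (Set.range fun g : G => (lp.single 2 g (1:ℂ) : ell2 G)))) := by
    rw [← Homeomorph.image_closure]
    exact ⟨y, hd y, by simp [LinearIsometryEquiv.coe_toHomeomorph]⟩
  refine closure_mono ?_ h2
  simpa [LinearIsometryEquiv.coe_toHomeomorph] using hsub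

lemma claimA (hF : IsFourier μ F) (a : ell2 G) (S : Lp ℂ 2 μ →L[ℂ] Lp ℂ 2 μ)
    (hS : ∀ g : G, S (F (lp.single 2 g 1)) = charCLM μ (-g) (F a)) (f : Lp ℂ 2 μ) :
    ⇑(S f) =ᵐ[μ] fun ξ => (F a : GDual G → ℂ) ξ * (f : GDual G → ℂ) ξ := by
  have h1 : MemLp (fun _ : GDual G => (1 : ℂ)) 2 μ := memLp_const 1
  have heq : (mulCLM μ h1 aux_hpq1) ∘L S = mulCLM μ (Lp.memLp (F a)) aux_hpq1 := by
    apply ContinuousLinearMap.ext_on (dense_span_fourier_single (G := G) (F := F))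
    rintro _ ⟨g, rfl⟩
    simp only [ContinuousLinearMap.comp_apply]
    rw [hS g]
    apply Lp.ext
    filter_upwards [mulCLM_coeFn μ h1 aux_hpq1 (charCLM μ (-g) (F a)),
      charCLM_coeFn μ (-g) (F a),
      mulCLM_coeFn μ (Lp.memLp (F a)) aux_hpq1 (F (lp.single 2 g 1)),
      hF_single hF g (1 : ℂ)] with ξ k1 k2 k3 k4
    rw [k1, k2, k3, k4]
    ring
  have hc : ⇑((mulCLM μ h1 aux_hpq1) (S f)) = ⇑((mulCLM μ (Lp.memLp (F a)) aux_hpq1) f) := by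
    rw [← ContinuousLinearMap.comp_apply, heq]
  filter_upwards [mulCLM_coeFn μ h1 aux_hpq1 (S f),
    mulCLM_coeFn μ (Lp.memLp (F a)) aux_hpq1 f] with ξ k1 k2
  calc (S f : GDual G → ℂ) ξ = (1 : ℂ) * (S f : GDual G → ℂ) ξ := (one_mul _).symm
    _ = ((mulCLM μ h1 aux_hpq1) (S f) : GDual G → ℂ) ξ := k1.symm
    _ = ((mulCLM μ (Lp.memLp (F a)) aux_hpq1) f : GDual G → ℂ) ξ := congrFun hc ξ
    _ = (F a : GDual G → ℂ) ξ * (f : GDual G → ℂ) ξ := k2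

lemma memLinfty_of_CLM (hF : IsFourier μ F) (a : ell2 G) (S : Lp ℂ 2 μ →L[ℂ] Lp ℂ 2 μ)
    (hS : ∀ g : G, S (F (lp.single 2 g 1)) = charCLM μ (-g) (F a)) :
    MemLp (⇑(F a)) ∞ μ := by
  set C := ‖S‖ with hC
  have hC0 : 0 ≤ C := norm_nonneg _
  have key : ∀ r : ℝ, C < r → μ {ξ | r ≤ ‖(F a : GDual G → ℂ) ξ‖} = 0 := by
    intro r hr
    have hr0 : 0 ≤ r := le_trans hC0 hr.le
    set E := {ξ | r ≤ ‖(F a : GDual G → ℂ) ξ‖} with hEdef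
    have hE : MeasurableSet E :=
      measurableSet_le measurable_const (Lp.stronglyMeasurable (F a)).measurable.norm
    by_contra hne
    have hμE_top : μ E ≠ ∞ := (measure_lt_top μ E).ne
    set ind : Lp ℂ 2 μ := indicatorConstLp 2 hE hμE_top (1 : ℂ) with hind
    have hae := claimA hF a S hS ind
    have hics : ⇑ind =ᵐ[μ] E.indicator (fun _ => (1 : ℂ)) := indicatorConstLp_coeFn
    have hmono : eLpNorm (E.indicator fun _ => (r : ℂ)) 2 μ ≤ eLpNorm (⇑(S ind)) 2 μ := by
      apply eLpNorm_mono_ae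
      filter_upwards [hae, hics] with ξ k1 k2
      rw [k1, k2]
      by_cases hmem : ξ ∈ E
      · rw [Set.indicator_of_mem hmem, Set.indicator_of_mem hmem, mul_one]
        have : r ≤ ‖(F a : GDual G → ℂ) ξ‖ := hmem
        simpa [Complex.norm_real, abs_of_nonneg hr0] using this
      · simp [Set.indicator_of_notMem hmem]
    have hlow : r * (μ E).toReal ^ (1/2 : ℝ) ≤ ‖S ind‖ := by
      have h2 : eLpNorm (E.indicator fun _ => (r : ℂ)) 2 μ
          = ‖(r : ℂ)‖₊ * μ E ^ (1/2 : ℝ) := by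
        rw [eLpNorm_indicator_const hE two_ne_zero ENNReal.ofNat_ne_top, enorm_eq_nnnorm]
        norm_num
      have h3 := ENNReal.toReal_mono (Lp.eLpNorm_ne_top (S ind)) hmono
      rw [h2, ENNReal.toReal_mul, ← Lp.norm_def] at h3
      refine le_trans (le_of_eq ?_) h3
      rw [← ENNReal.toReal_rpow, ENNReal.coe_toReal, coe_nnnorm]
      congr 1
      rw [Complex.norm_real, Real.norm_eq_abs, abs_of_nonneg hr0]
    have hup : ‖S ind‖ ≤ C * (μ E).toReal ^ (1/2 : ℝ) := by
      refine le_trans (S.le_opNorm ind) ?_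
      rw [hind, norm_indicatorConstLp two_ne_zero ENNReal.ofNat_ne_top]
      norm_num
      exact le_rfl
    have hpos : 0 < (μ E).toReal ^ (1/2 : ℝ) :=
      Real.rpow_pos_of_pos (ENNReal.toReal_pos hne hμE_top) _
    have : r ≤ C := le_of_mul_le_mul_right (le_trans hlow hup) hpos
    exact absurd this (not_le.mpr hr)
  refine memLp_top_of_bound (Lp.aestronglyMeasurable (F a)) C ?_
  have hsub : {ξ | ¬ ‖(F a : GDual G → ℂ) ξ‖ ≤ C}
      ⊆ ⋃ n : ℕ, {ξ | C + 1/(n+1 : ℝ) ≤ ‖(F a : GDual G → ℂ) ξ‖} := by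
    intro ξ hξ
    rw [Set.mem_setOf_eq, not_le] at hξ
    obtain ⟨n, hn⟩ := exists_nat_one_div_lt (sub_pos.mpr hξ)
    exact Set.mem_iUnion.mpr ⟨n, by rw [Set.mem_setOf_eq]; linarith⟩
  have hnull : μ {ξ | ¬ ‖(F a : GDual G → ℂ) ξ‖ ≤ C} = 0 :=
    measure_mono_null hsub (measure_iUnion_null fun n =>
      key _ (lt_add_of_pos_right C (by positivity)))
  exact (MeasureTheory.ae_iff).mpr hnull

end Fourier

end AuxStatement0

/-- The convolution operator `x ↦ A ∗ x` is a well defined bounded operator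
from `ℓ²_N(G)` into `ℓ²_M(G)` iff every entry of the transfer matrix `Â = [â_{m,n}]`
belongs to `L^∞(Ĝ)`. -/
theorem statement0
    (μ : Measure (GDual G)) [IsProbabilityMeasure μ] [μ.IsHaarMeasure]
    (F : ell2 G ≃ₗᵢ[ℂ] Lp ℂ 2 μ) (hF : IsFourier μ F)
    {M N : ℕ} (A : Fin M → Fin N → ell2 G) :
    (∃ T : ell2N G N →L[ℂ] ell2N G M,
        ∀ (x : ell2N G N) (m : Fin M) (g : G), (T x m : ∀ _ : G, ℂ) g = convEntry A x m g)
      ↔ ∀ (m : Fin M) (n : Fin N), MemLp (⇑(F (A m n))) ∞ μ := by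
  classical
  constructor
  · rintro ⟨T, hT⟩ m n
    set ι : ell2 G →L[ℂ] ell2N G N :=
      (((PiLp.continuousLinearEquiv 2 ℂ (fun _ : Fin N => ell2 G)).symm :
          (∀ _ : Fin N, ell2 G) →L[ℂ] ell2N G N)) ∘L
        ContinuousLinearMap.pi
          (fun i : Fin N => if i = n then ContinuousLinearMap.id ℂ (ell2 G) else 0) with hιdef
    have hιapp : ∀ (y : ell2 G) (i : Fin N), ι y i = if i = n then y else 0 := by
      intro y i
      rw [hιdef]
      simp only [ContinuousLinearMap.comp_apply, ContinuousLinearMap.pi_apply,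
        ContinuousLinearEquiv.coe_coe, PiLp.continuousLinearEquiv_symm_apply,
        PiLp.toLp_apply]
      split_ifs <;> simp
    set T' : ell2 G →L[ℂ] ell2 G :=
      ((ContinuousLinearMap.proj m : (∀ _ : Fin M, ell2 G) →L[ℂ] ell2 G) ∘L
        ((PiLp.continuousLinearEquiv 2 ℂ (fun _ : Fin M => ell2 G)) :
          ell2N G M →L[ℂ] ∀ _ : Fin M, ell2 G)) ∘L (T ∘L ι) with hT'def
    have hT'app : ∀ y : ell2 G, T' y = T (ι y) m := fun y => rfl
    have hT' : ∀ (y : ell2 G) (g : G), (T' y : ∀ _ : G, ℂ) g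
        = ∑' g', (A m n : ∀ _ : G, ℂ) (g - g') * (y : ∀ _ : G, ℂ) g' := by
      intro y g
      rw [hT'app, hT (ι y) m g]
      unfold convEntry
      rw [Finset.sum_eq_single n]
      · rw [hιapp, if_pos rfl]
      · intro b _ hb
        rw [hιapp, if_neg hb]
        simp
      · intro hn
        exact absurd (Finset.mem_univ n) hn
    set S : Lp ℂ 2 μ →L[ℂ] Lp ℂ 2 μ := FL F ∘L (T' ∘L FLsymm F) with hSdef
    have hS : ∀ g : G, S (F (lp.single 2 g 1)) = charCLM μ (-g) (F (A m n)) := by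
      intro g
      have h1 : T' (lp.single 2 g 1) = shift g (A m n) := by
        refine ell2_ext fun h => ?_
        rw [hT' _ h, shift_apply, tsum_eq_single g]
        · rw [single_apply_self', mul_one]
        · intro b hb
          rw [single_apply_ne' g 1 hb, mul_zero]
      rw [hSdef]
      simp only [ContinuousLinearMap.comp_apply, FL_apply, FLsymm_apply,
        LinearIsometryEquiv.symm_apply_apply]
      rw [h1, fourier_shift hF]
    exact memLinfty_of_CLM hF (A m n) S hS
  · intro h
    refine ⟨(((PiLp.continuousLinearEquiv 2 ℂ (fun _ : Fin M => ell2 G)).symm :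
          (∀ _ : Fin M, ell2 G) →L[ℂ] ell2N G M)) ∘L
        (ContinuousLinearMap.pi fun m : Fin M => ∑ n,
          (FLsymm F ∘L (mulCLM μ (h m n) aux_hpq2 ∘L FL F)) ∘L
            ((ContinuousLinearMap.proj n : (∀ _ : Fin N, ell2 G) →L[ℂ] ell2 G) ∘L
              ((PiLp.continuousLinearEquiv 2 ℂ (fun _ : Fin N => ell2 G)) :
                ell2N G N →L[ℂ] ∀ _ : Fin N, ell2 G))), fun x m g => ?_⟩
    have hTm : ((((PiLp.continuousLinearEquiv 2 ℂ (fun _ : Fin M => ell2 G)).symm :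
          (∀ _ : Fin M, ell2 G) →L[ℂ] ell2N G M)) ∘L
        (ContinuousLinearMap.pi fun m : Fin M => ∑ n,
          (FLsymm F ∘L (mulCLM μ (h m n) aux_hpq2 ∘L FL F)) ∘L
            ((ContinuousLinearMap.proj n : (∀ _ : Fin N, ell2 G) →L[ℂ] ell2 G) ∘L
              ((PiLp.continuousLinearEquiv 2 ℂ (fun _ : Fin N => ell2 G)) :
                ell2N G N →L[ℂ] ∀ _ : Fin N, ell2 G)))) x m
        = ∑ n, F.symm (mulCLM μ (h m n) aux_hpq2 (F (x n))) := by
      simp only [ContinuousLinearMap.comp_apply, ContinuousLinearEquiv.coe_coe,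
        PiLp.continuousLinearEquiv_symm_apply, PiLp.toLp_apply,
        ContinuousLinearMap.pi_apply, ContinuousLinearMap.sum_apply,
        PiLp.continuousLinearEquiv_apply,
        ContinuousLinearMap.proj_apply, FL_apply, FLsymm_apply]
    rw [hTm]
    unfold convEntry
    rw [lp.coeFn_sum, Finset.sum_apply]
    refine Finset.sum_congr rfl fun n _ => ?_
    exact conv_spec hF (A m n) (h m n) (x n) g

end GroupSampling
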